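/- Let Δ ≥ 2, n ≥ Δ + 1, and let D be a dominating set of the bipartite double-cycle graph G(Δ, n). Then there exists an independent set I of the cycle graph C_n with (Δ − 1)·|I| ≥ |B|, where B = { v ∈ ZMod n : (v, false) ∉ D and (v, true) ∉ D }; moreover |B| ≥ n − |D|. -/

import Mathlib

/-- The cycle graph on `ZMod n`. -/
def cycleGraph (n : ℕ) : SimpleGraph (ZMod n) :=
  SimpleGraph.fromRel (fun u v => v = u + 1)

/-- The bipartite double-cycle graph `G(Δ, n)` on `(ZMod n) × Bool`: the only
adjacencies are `(u, false) ~ (v, true)` iff `v - u ∈ {0, 1, …, Δ - 1}`. -/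
def doubleCycle (Δ n : ℕ) : SimpleGraph (ZMod n × Bool) :=
  SimpleGraph.fromRel (fun a b =>
    a.2 = false ∧ b.2 = true ∧ ∃ i : ℕ, i < Δ ∧ b.1 - a.1 = (i : ZMod n))

/-- If `D` is a dominating set of `G(Δ, n)` (`Δ ≥ 2`, `n ≥ Δ + 1`) and
`B = {v : (v, false) ∉ D ∧ (v, true) ∉ D}`, then `C_n` has an independent set
`I` with `(Δ - 1) * |I| ≥ |B|`; moreover `|B| ≥ n - |D|`. -/
theorem double_cycle_dominating_to_independent (Δ n : ℕ) [NeZero n]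
    (hΔ : 2 ≤ Δ) (hn : Δ + 1 ≤ n)
    (D : Finset (ZMod n × Bool))
    (hD : ∀ v : ZMod n × Bool, v ∈ D ∨ ∃ u ∈ D, (doubleCycle Δ n).Adj v u) :
    let B : Finset (ZMod n) :=
      Finset.univ.filter (fun v : ZMod n => (v, false) ∉ D ∧ (v, true) ∉ D)
    (∃ I : Finset (ZMod n),
      (∀ u ∈ I, ∀ v ∈ I, ¬ (cycleGraph n).Adj u v) ∧
      B.card ≤ (Δ - 1) * I.card) ∧
    n - D.card ≤ B.card := by
  intro B
  classical
  have hBdef : B = Finset.univ.filter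
      (fun v : ZMod n => (v, false) ∉ D ∧ (v, true) ∉ D) := rfl
  have hcard : Fintype.card (ZMod n) = n := ZMod.card n
  have hnpos : 0 < n := NeZero.pos n
  -- Part 2 : n - |D| ≤ |B|
  have part2 : n - D.card ≤ B.card := by
    have hsplit : B.card + (Finset.univ.filter
        (fun v : ZMod n => ¬ ((v, false) ∉ D ∧ (v, true) ∉ D))).card = n := by
      rw [hBdef, Finset.card_filter_add_card_filter_not, Finset.card_univ, hcard]
    have hCD : (Finset.univ.filter
        (fun v : ZMod n => ¬ ((v, false) ∉ D ∧ (v, true) ∉ D))).card ≤ D.card := by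
      apply Finset.card_le_card_of_injOn
        (fun v => if (v, false) ∈ D then (v, false) else (v, true))
      · intro v hv
        simp only [Finset.mem_coe, Finset.mem_filter, Finset.mem_univ, true_and, not_and, not_not] at hv
        by_cases h : (v, false) ∈ D
        · simpa [h]
        · simpa [h] using hv h
      · intro a _ b _ hab
        by_cases h1 : (a, false) ∈ D <;> by_cases h2 : (b, false) ∈ D <;>
          simp only [h1, h2, if_true, if_false, Prod.mk.injEq] at hab <;>
          first | exact hab.1 | simp at hab
    omega
  -- key structural fact about B
  have key : ∀ v ∈ B, ∃ u : ZMod n, (u, false) ∈ D ∧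
      ∃ i : ℕ, 0 < i ∧ i < Δ ∧ v - u = (i : ZMod n) := by
    intro v hv
    rw [hBdef, Finset.mem_filter] at hv
    obtain ⟨-, hvf, hvt⟩ := hv
    rcases hD (v, true) with h | ⟨u, hu, hadj⟩
    · exact absurd h hvt
    · rw [doubleCycle, SimpleGraph.fromRel_adj] at hadj
      obtain ⟨hne, h | h⟩ := hadj
      · simp at h
      · obtain ⟨huf, -, i, hiΔ, hi⟩ := h
        have hu' : (u.1, false) ∈ D := by
          have hu'' : u = (u.1, false) := by
            ext
            · rfl
            · simp [huf]
          rwa [hu''] at hu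
        have hune : u.1 ≠ v := fun h => hvf (h ▸ hu')
        refine ⟨u.1, hu', i, ?_, hiΔ, hi⟩
        rcases Nat.eq_zero_or_pos i with rfl | h0
        · exfalso
          simp only [Nat.cast_zero, sub_eq_zero] at hi
          exact hune hi.symm
        · exact h0
  choose! f hfD g hg1 hg2 hg3 using key
  refine ⟨?_, part2⟩
  set U : Finset (ZMod n) := B.image f with hU
  -- |B| ≤ (Δ-1) * |U|
  have hBU : B.card ≤ (Δ - 1) * U.card := by
    apply Finset.card_le_mul_card_image
    intro u hu
    calc (B.filter fun v => f v = u).card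
        ≤ ((Finset.Ico 1 Δ).image (fun i : ℕ => u + (i : ZMod n))).card := by
          apply Finset.card_le_card
          intro v hv
          rw [Finset.mem_filter] at hv
          obtain ⟨hvB, hfv⟩ := hv
          refine Finset.mem_image.2 ⟨g v, Finset.mem_Ico.2 ⟨hg1 v hvB, hg2 v hvB⟩, ?_⟩
          have h3 := hg3 v hvB
          rw [hfv] at h3
          linear_combination -h3
      _ ≤ (Finset.Ico 1 Δ).card := Finset.card_image_le
      _ = Δ - 1 := by rw [Nat.card_Ico]
  -- U and B are disjoint
  have hUB : U.card + B.card ≤ n := by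
    have hdisj : Disjoint U B := by
      rw [Finset.disjoint_left]
      intro u hu huB
      obtain ⟨v, hv, rfl⟩ := Finset.mem_image.1 hu
      rw [hBdef, Finset.mem_filter] at huB
      exact huB.2.1 (hfD v hv)
    calc U.card + B.card = (U ∪ B).card := (Finset.card_union_of_disjoint hdisj).symm
      _ ≤ Fintype.card (ZMod n) := Finset.card_le_univ _
      _ = n := hcard
  rcases eq_or_lt_of_le hΔ with h2 | h3
  · -- Δ = 2 : B itself is independent
    subst h2
    refine ⟨B, ?_, by simpa using le_refl B.card⟩
    intro u hu v hv hadj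
    rw [cycleGraph, SimpleGraph.fromRel_adj] at hadj
    have main : ∀ a ∈ B, ∀ b ∈ B, b = a + 1 → False := by
      intro a ha b hb hba
      have hgb : g b = 1 := by have := hg1 b hb; have := hg2 b hb; omega
      have h3 := hg3 b hb
      rw [hgb, Nat.cast_one] at h3
      have hfb : f b = a := by
        linear_combination hba - h3
      have := hfD b hb
      rw [hfb] at this
      rw [hBdef, Finset.mem_filter] at ha
      exact ha.2.1 this
    obtain ⟨hne, h | h⟩ := hadj
    · exact main u hu v hv h
    · exact main v hv u hu h
  · -- Δ ≥ 3
    set c := Δ - 1 with hc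
    have hc2 : 2 ≤ c := by omega
    set b := B.card with hb
    set m := U.card with hm
    set q := (b + c - 1) / c with hq
    have hdm := Nat.div_add_mod (b + c - 1) c
    rw [← hq] at hdm
    set r := (b + c - 1) % c with hr
    have hrc : r < c := Nat.mod_lt _ (by omega)
    have hbq : b ≤ c * q := by
      set t := c * q
      omega
    have hqm : q ≤ m := by
      have h1 : c * q < c * m + c := by
        set t := c * q
        set s := c * m
        omega
      have h2 : c * q < c * (m + 1) := by rw [Nat.mul_succ]; exact h1
      exact Nat.lt_succ_iff.mp (Nat.lt_of_mul_lt_mul_left h2)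
    have h2qn : 2 * q ≤ n := by
      rcases Nat.eq_zero_or_pos q with hq0 | hq0
      · omega
      · obtain ⟨q', hq'⟩ : ∃ q', q = q' + 1 := ⟨q - 1, by omega⟩
        have h2q' : 2 * q' ≤ c * q' := Nat.mul_le_mul_right q' hc2
        have hms : c * q = c * q' + c := by rw [hq', Nat.mul_succ]
        set t := c * q'
        set s := c * q
        omega
    -- explicit independent set {0, 2, ..., 2(q-1)}
    refine ⟨(Finset.range q).image (fun i : ℕ => ((2 * i : ℕ) : ZMod n)), ?_, ?_⟩
    · intro u hu v hv hadj
      simp only [Finset.mem_image, Finset.mem_range] at hu hv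
      obtain ⟨i, hi, rfl⟩ := hu
      obtain ⟨j, hj, rfl⟩ := hv
      rw [cycleGraph, SimpleGraph.fromRel_adj] at hadj
      have main : ∀ a b : ℕ, a < q → b < q →
          ((2 * b : ℕ) : ZMod n) = ((2 * a : ℕ) : ZMod n) + 1 → False := by
        intro a b ha hb heq
        have heq' : ((2 * b : ℕ) : ZMod n) = ((2 * a + 1 : ℕ) : ZMod n) := by
          rw [heq]; push_cast; ring
        have hmod := (ZMod.natCast_eq_natCast_iff _ _ _).mp heq'
        have h1 : 2 * b % n = (2 * a + 1) % n := hmod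
        rw [Nat.mod_eq_of_lt (by omega), Nat.mod_eq_of_lt (by omega)] at h1
        omega
      obtain ⟨hne, h | h⟩ := hadj
      · exact main i j hi hj h
      · exact main j i hj hi h
    · have hIcard : ((Finset.range q).image (fun i : ℕ => ((2 * i : ℕ) : ZMod n))).card = q := by
        rw [Finset.card_image_of_injOn, Finset.card_range]
        intro i hi j hj hij
        simp only [Finset.coe_range, Set.mem_Iio] at hi hj
        have hmod := (ZMod.natCast_eq_natCast_iff _ _ _).mp hij
        have h1 : 2 * i % n = 2 * j % n := hmod
        rw [Nat.mod_eq_of_lt (by omega), Nat.mod_eq_of_lt (by omega)] at h1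
        omega
      rw [hIcard]
      exact hbq
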